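/- Let α, β ∈ ℍ be pure imaginary quaternions (i.e. with zero real part) and let γ ∈ ℍ. Suppose x ∈ ℍ satisfies x² + α*x + x*β - γ = 0 and the real part of x is nonzero. Then the 2×2 quaternion matrix [[-α, γ],[1, β]] is diagonalizable over ℍ: there exist P, P' ∈ Matrix (Fin 2) (Fin 2) ℍ with P * P' = 1 and P' * P = 1 such that P' * [[-α, γ],[1, β]] * P is a diagonal matrix. -/

import Mathlib

private lemma syl_aux (l m : Quaternion ℝ) :
    l * (-l + star m) - (-l + star m) * m
    = -((2*(l.re - m.re)) • l + (((Quaternion.normSq m - Quaternion.normSq l : ℝ)) : Quaternion ℝ)) := by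
  ext <;> simp [Quaternion.normSq_def', Quaternion.re_mul, Quaternion.imI_mul,
    Quaternion.imJ_mul, Quaternion.imK_mul, ← Quaternion.coe_pow] <;> ring

private lemma comm_aux (r c : ℝ) (a : Quaternion ℝ) :
    (r • a + (c : Quaternion ℝ)) * a = a * (r • a + (c : Quaternion ℝ)) := by
  ext <;> simp [Quaternion.re_mul, Quaternion.imI_mul, Quaternion.imJ_mul, Quaternion.imK_mul] <;> ring

set_option maxHeartbeats 1000000 in
theorem diagonalizable_of_quadratic_solution (α β γ x : Quaternion ℝ)
    (hα : α.re = 0) (hβ : β.re = 0)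
    (hx : x ^ 2 + α * x + x * β - γ = 0) (hre : x.re ≠ 0) :
    ∃ P P' : Matrix (Fin 2) (Fin 2) (Quaternion ℝ),
      P * P' = 1 ∧ P' * P = 1 ∧ (P' * !![-α, γ; 1, β] * P).IsDiag := by
  have hx' : x * x + α * x + x * β = γ := by
    rw [sub_eq_zero, pow_two] at hx; exact hx
  set l : Quaternion ℝ := x + β with hl
  set m : Quaternion ℝ := -(α + x) with hm
  have hlre : l.re = x.re := by simp [hl, hβ]
  have hmre : m.re = -x.re := by simp [hm, hα]
  set c' : Quaternion ℝ := -l + star m with hc'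
  set D : Quaternion ℝ := (4*x.re) • l +
      (((Quaternion.normSq m - Quaternion.normSq l : ℝ)) : Quaternion ℝ) with hD
  have key : l * c' - c' * m = -D := by
    rw [hc', hD, syl_aux l m, hlre, hmre]; ring_nf
  have hD0 : D ≠ 0 := by
    intro h0
    have hI : l.imI = 0 := by
      have := congrArg (fun q : Quaternion ℝ => q.imI) h0
      simp [hD, Quaternion.imI_zero] at this
      rcases this with h|h
      · exact absurd h hre
      · exact h
    have hJ : l.imJ = 0 := by
      have := congrArg (fun q : Quaternion ℝ => q.imJ) h0
      simp [hD, Quaternion.imJ_zero] at this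
      rcases this with h|h
      · exact absurd h hre
      · exact h
    have hK : l.imK = 0 := by
      have := congrArg (fun q : Quaternion ℝ => q.imK) h0
      simp [hD, Quaternion.imK_zero] at this
      rcases this with h|h
      · exact absurd h hre
      · exact h
    have hRe := congrArg (fun q : Quaternion ℝ => q.re) h0
    simp [hD, Quaternion.re_zero, Quaternion.normSq_def', hI, hJ, hK, hlre, ← Quaternion.coe_pow] at hRe
    nlinarith [sq_nonneg m.re, sq_nonneg m.imI, sq_nonneg m.imJ, sq_nonneg m.imK,
      mul_self_pos.mpr hre]
  have hcomm : Commute D l := by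
    show D * l = l * D
    rw [hD]; exact comm_aux _ _ _
  set s : Quaternion ℝ := D⁻¹ * c' with hs
  have hinv : D⁻¹ * l = l * D⁻¹ := (hcomm.inv_left₀).eq
  have hsyl : l * s - s * m = -1 := by
    have h1 : l * s - s * m = D⁻¹ * (l * c' - c' * m) := by
      simp only [hs, mul_sub, ← mul_assoc]
      rw [← hinv]
    rw [h1, key, mul_neg, inv_mul_cancel₀ hD0]
  have heig : γ - α * x - (x * x + x * β) = 0 := by
    rw [← hx']; noncomm_ring
  have hT : !![0,1;1,-x] * !![-α, γ; 1, β] * !![x,(1:Quaternion ℝ);1,0] = !![l, 1; 0, m] := by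
    apply Matrix.ext; intro i j
    fin_cases i <;> fin_cases j <;>
      simp [Matrix.mul_apply, Fin.sum_univ_two, hl, hm]
    · rw [show (-α + -x) * x + (γ + -(x * β)) = γ - α * x - (x * x + x * β) by noncomm_ring, heig]
    · abel
  have h2 : !![1,-s;0,1] * !![l, (1:Quaternion ℝ); 0, m] * !![1, s; 0, 1] = !![l, 0; 0, m] := by
    apply Matrix.ext; intro i j
    fin_cases i <;> fin_cases j <;>
      simp [Matrix.mul_apply, Fin.sum_univ_two]
    rw [show l * s + (1 + -(s * m)) = (l * s - s * m) + 1 by noncomm_ring, hsyl]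
    abel
  have e1 : !![x,(1:Quaternion ℝ);1,0] * !![0,1;1,-x] = 1 := by
    apply Matrix.ext; intro i j
    fin_cases i <;> fin_cases j <;>
      simp [Matrix.mul_apply, Fin.sum_univ_two, Matrix.one_apply]
  have e2 : !![0,(1:Quaternion ℝ);1,-x] * !![x,1;1,0] = 1 := by
    apply Matrix.ext; intro i j
    fin_cases i <;> fin_cases j <;>
      simp [Matrix.mul_apply, Fin.sum_univ_two, Matrix.one_apply]
  have e3 : !![1,s;0,1] * !![1,-s;0,1] = 1 := by
    apply Matrix.ext; intro i j
    fin_cases i <;> fin_cases j <;>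
      simp [Matrix.mul_apply, Fin.sum_univ_two, Matrix.one_apply]
  have e4 : !![1,-s;0,1] * !![1,s;0,1] = 1 := by
    apply Matrix.ext; intro i j
    fin_cases i <;> fin_cases j <;>
      simp [Matrix.mul_apply, Fin.sum_univ_two, Matrix.one_apply]
  refine ⟨!![x, 1; 1, 0] * !![1, s; 0, 1], !![1, -s; 0, 1] * !![0, 1; 1, -x], ?_, ?_, ?_⟩
  · rw [mul_assoc, ← mul_assoc !![1, s; 0, 1], e3, one_mul, e1]
  · rw [mul_assoc, ← mul_assoc !![0, 1; 1, -x], e2, one_mul, e4]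
  · have hfull : (!![1, -s; 0, 1] * !![0, 1; 1, -x]) * !![-α, γ; 1, β] *
        (!![x, 1; 1, 0] * !![1, s; 0, 1]) = !![l, 0; 0, m] := by
      rw [show (!![1, -s; 0, 1] * !![0, 1; 1, -x]) * !![-α, γ; 1, β] *
          (!![x, (1:Quaternion ℝ); 1, 0] * !![1, s; 0, 1])
          = !![1, -s; 0, 1] * (!![0, 1; 1, -x] * !![-α, γ; 1, β] * !![x, 1; 1, 0]) * !![1, s; 0, 1] by
        simp only [mul_assoc], hT, h2]
    rw [hfull]
    have hd : !![l, 0; 0, m] = Matrix.diagonal ![l, m] := by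
      apply Matrix.ext; intro i j
      fin_cases i <;> fin_cases j <;> simp [Matrix.diagonal]
    rw [hd]
    exact Matrix.isDiag_diagonal _
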